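/- The series ∑_{m=1}^∞ (2m-2)!/(m!·(m-1)!) · 2/4^m converges to 1. -/

import Mathlib

open Filter Topology

lemma cb_sq_le (n : ℕ) : (n + 1) * (Nat.centralBinom n) ^ 2 ≤ 16 ^ n := by
  induction n with
  | zero => simp [Nat.centralBinom]
  | succ n ih =>
    have h := Nat.succ_mul_centralBinom_succ n
    have key : (n + 2) * (2 * n + 1) ^ 2 ≤ 4 * (n + 1) ^ 3 := by nlinarith
    have h2 : ((n + 1) + 1) * (Nat.centralBinom (n + 1)) ^ 2 * (n + 1) ^ 2 ≤
        16 ^ (n + 1) * (n + 1) ^ 2 := by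
      have e : ((n + 1) + 1) * (Nat.centralBinom (n + 1)) ^ 2 * (n + 1) ^ 2 =
          (n + 2) * ((n + 1) * Nat.centralBinom (n + 1)) ^ 2 := by ring
      rw [e, h]
      calc (n + 2) * (2 * (2 * n + 1) * Nat.centralBinom n) ^ 2
          = ((n + 2) * (2 * n + 1) ^ 2) * (4 * Nat.centralBinom n ^ 2) := by ring
        _ ≤ (4 * (n + 1) ^ 3) * (4 * Nat.centralBinom n ^ 2) :=
            Nat.mul_le_mul_right _ key
        _ = 16 * (n + 1) ^ 2 * ((n + 1) * Nat.centralBinom n ^ 2) := by ring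
        _ ≤ 16 * (n + 1) ^ 2 * 16 ^ n := Nat.mul_le_mul_left _ ih
        _ = 16 ^ (n + 1) * (n + 1) ^ 2 := by ring
    exact Nat.le_of_mul_le_mul_right h2 (by positivity)

noncomputable def bfun (n : ℕ) : ℝ := (Nat.centralBinom n : ℝ) / 4 ^ n

lemma bfun_nonneg (n : ℕ) : 0 ≤ bfun n := by unfold bfun; positivity

lemma bfun_sq_le (n : ℕ) : (bfun n) ^ 2 ≤ 1 / (n + 1) := by
  have h := cb_sq_le n
  have h' : ((n : ℝ) + 1) * (Nat.centralBinom n : ℝ) ^ 2 ≤ 16 ^ n := by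
    exact_mod_cast h
  rw [bfun, div_pow, div_le_div_iff₀ (by positivity) (by positivity)]
  have : ((4 : ℝ) ^ n) ^ 2 = 16 ^ n := by
    rw [← pow_mul, mul_comm, pow_mul]; norm_num
  rw [this]
  linarith
lemma bfun_tendsto : Tendsto bfun atTop (𝓝 0) := by
  have h1 : Tendsto (fun n : ℕ => Real.sqrt (1 / (n + 1))) atTop (𝓝 0) := by
    have : Tendsto (fun n : ℕ => 1 / ((n : ℝ) + 1)) atTop (𝓝 0) :=
      tendsto_one_div_add_atTop_nhds_zero_nat
    have hc : Tendsto Real.sqrt (𝓝 0) (𝓝 0) := by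
      simpa using Real.continuous_sqrt.tendsto 0
    exact hc.comp this
  refine squeeze_zero bfun_nonneg (fun n => ?_) h1
  have := bfun_sq_le n
  calc bfun n = Real.sqrt ((bfun n) ^ 2) := by
        rw [Real.sqrt_sq (bfun_nonneg n)]
    _ ≤ Real.sqrt (1 / (n + 1)) := Real.sqrt_le_sqrt this

lemma term_eq (m : ℕ) :
    ((2 * m).factorial : ℝ) / ((m + 1).factorial * m.factorial) * 2 / 4 ^ (m + 1) =
      bfun m - bfun (m + 1) := by
  have hfac : ((2 * m).factorial : ℝ) =
      (Nat.centralBinom m : ℝ) * m.factorial * m.factorial := by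
    have := Nat.choose_mul_factorial_mul_factorial (show m ≤ 2 * m by omega)
    rw [Nat.centralBinom]
    have h2 : 2 * m - m = m := by omega
    rw [h2] at this
    exact_mod_cast this.symm
  have hrec : ((m : ℝ) + 1) * Nat.centralBinom (m + 1) =
      2 * (2 * m + 1) * Nat.centralBinom m := by
    exact_mod_cast Nat.succ_mul_centralBinom_succ m
  have hcb1 : (Nat.centralBinom (m + 1) : ℝ) =
      2 * (2 * m + 1) * Nat.centralBinom m / (m + 1) := by
    field_simp
    linarith [hrec]
  have hmf : ((m + 1).factorial : ℝ) = (m + 1) * m.factorial := by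
    exact_mod_cast Nat.factorial_succ m
  rw [hfac, hmf, bfun, bfun, hcb1]
  have hm1 : (0 : ℝ) < (m : ℝ) + 1 := by positivity
  have hf : (0 : ℝ) < (m.factorial : ℝ) := by exact_mod_cast m.factorial_pos
  field_simp
  ring

theorem stmt_3 :
    HasSum (fun m : ℕ =>
      ((2 * m).factorial : ℝ) / ((m + 1).factorial * m.factorial) * 2 / 4 ^ (m + 1)) 1 := by
  rw [hasSum_iff_tendsto_nat_of_nonneg (fun m => by positivity)]
  have hsum : ∀ n : ℕ, ∑ i ∈ Finset.range n,
      ((2 * i).factorial : ℝ) / ((i + 1).factorial * i.factorial) * 2 / 4 ^ (i + 1) =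
      1 - bfun n := by
    intro n
    have : ∀ i ∈ Finset.range n, ((2 * i).factorial : ℝ) /
        ((i + 1).factorial * i.factorial) * 2 / 4 ^ (i + 1) = bfun i - bfun (i + 1) :=
      fun i _ => term_eq i
    rw [Finset.sum_congr rfl this, Finset.sum_range_sub']
    simp [bfun, Nat.centralBinom]
  simp only [hsum]
  have := bfun_tendsto
  have h1 : Tendsto (fun n : ℕ => 1 - bfun n) atTop (𝓝 (1 - 0)) :=
    tendsto_const_nhds.sub this
  simpa using h1
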